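/- Let (β_m)_{m≥0} be a sequence of complex numbers with β_0 = 1 satisfying β_{m+n} + (n−m)β_{m+n+1} = β_n β_m + n β_m β_{n+1} − m β_n β_{m+1} for all m, n ≥ 0. Then β_m = β_1^m for all m ≥ 0. -/
import Mathlib

/-- A sequence `β : ℕ → ℂ` with `β 0 = 1` satisfying the quadratic
recurrence satisfies `β m = (β 1) ^ m`. -/
theorem stmt_0 (β : ℕ → ℂ) (h0 : β 0 = 1)
    (hrec : ∀ m n : ℕ, β (m + n) + ((n : ℂ) - (m : ℂ)) * β (m + n + 1) =
      β n * β m + (n : ℂ) * β m * β (n + 1) - (m : ℂ) * β n * β (m + 1)) :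
    ∀ m : ℕ, β m = (β 1) ^ m := by
  have key : ∀ n : ℕ, β (n + 1) = β 1 * β n := by
    intro n
    have e1 := hrec 1 n
    have e2 := hrec n 1
    rw [show 1 + n = n + 1 from Nat.add_comm 1 n] at e1
    linear_combination (e1 + e2) / 2
  intro m
  induction m with
  | zero => simpa using h0
  | succ k ih => rw [key k, ih, pow_succ]; ring
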